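/- Let G and G' be finite directed graphs with the same vertex set such that every arc of G' is an arc of G. Then there exists an injective map m from the set of attractors of G into the set of attractors of G' such that m(B) ⊆ B for every attractor B of G; consequently, the number of attractors of G is at most the number of attractors of G'. -/

import Mathlib

/-- A trap set of a directed graph (given by its arc relation `E`):
a nonempty set of vertices with no outgoing arc. -/
def TrapSet {V : Type*} (E : V → V → Prop) (A : Set V) : Prop :=
  A.Nonempty ∧ ∀ x ∈ A, ∀ y, E x y → y ∈ A

/-- An attractor: an inclusion-minimal trap set. -/
def Attractor {V : Type*} (E : V → V → Prop) (A : Set V) : Prop :=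
  TrapSet E A ∧ ∀ B ⊆ A, TrapSet E B → B = A

/-- Arc relation of the asynchronous state transition graph of a Boolean network `f`. -/
def astg {V : Type*} (f : V → (V → Bool) → Bool) (x y : V → Bool) : Prop :=
  ∃ v, y v = f v x ∧ y v ≠ x v ∧ ∀ u, u ≠ v → y u = x u

/-- `f` is an AND-NOT Boolean network: every update function is constant or a
conjunction of literals over pairwise distinct variables. -/
def IsAndNot {V : Type*} [DecidableEq V] (f : V → (V → Bool) → Bool) : Prop :=
  ∀ v, (∃ b, ∀ x, f v x = b) ∨
    ∃ (L : Finset V) (sgn : V → Bool), ∀ x, f v x = decide (∀ u ∈ L, x u = sgn u)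

/-- Positive arc `u → v` of the local influence graph of `f` at state `x`. -/
def localPos {V : Type*} [DecidableEq V] (f : V → (V → Bool) → Bool)
    (x : V → Bool) (u v : V) : Prop :=
  f v (Function.update x u false) = false ∧ f v (Function.update x u true) = true

/-- Negative arc `u → v` of the local influence graph of `f` at state `x`. -/
def localNeg {V : Type*} [DecidableEq V] (f : V → (V → Bool) → Bool)
    (x : V → Bool) (u v : V) : Prop :=
  f v (Function.update x u false) = true ∧ f v (Function.update x u true) = false

/-- Positive arc of the global influence graph of `f`. -/
def igPos {V : Type*} [DecidableEq V] (f : V → (V → Bool) → Bool) (u v : V) : Prop :=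
  ∃ x, localPos f x u v

/-- Negative arc of the global influence graph of `f`. -/
def igNeg {V : Type*} [DecidableEq V] (f : V → (V → Bool) → Bool) (u v : V) : Prop :=
  ∃ x, localNeg f x u v

/-- The data of a cycle in a signed directed graph: `n ≥ 1` pairwise distinct vertices
`vtx 0, …, vtx (n-1)` together with a sign `sgn i` for the arc `vtx i → vtx ((i+1) % n)`
(`true` = positive, `false` = negative). -/
structure CycleData (V : Type*) where
  n : ℕ
  npos : 0 < n
  vtx : ℕ → V
  sgn : ℕ → Bool
  inj : ∀ i, i < n → ∀ j, j < n → vtx i = vtx j → i = j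

/-- `C` is a cycle of the signed directed graph with positive arcs `P` and negative arcs `N`. -/
def IsCycleIn {V : Type*} (C : CycleData V) (P N : V → V → Prop) : Prop :=
  ∀ i, i < C.n →
    if C.sgn i then P (C.vtx i) (C.vtx ((i + 1) % C.n))
    else N (C.vtx i) (C.vtx ((i + 1) % C.n))

/-- `v` is a vertex of the cycle `C`. -/
def InCycle {V : Type*} (C : CycleData V) (v : V) : Prop :=
  ∃ i, i < C.n ∧ C.vtx i = v

/-- The positive arc `u → v` is an arc of the cycle `C`. -/
def PosArcOf {V : Type*} (C : CycleData V) (u v : V) : Prop :=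
  ∃ i, i < C.n ∧ C.vtx i = u ∧ C.vtx ((i + 1) % C.n) = v ∧ C.sgn i = true

/-- The negative arc `u → v` is an arc of the cycle `C`. -/
def NegArcOf {V : Type*} (C : CycleData V) (u v : V) : Prop :=
  ∃ i, i < C.n ∧ C.vtx i = u ∧ C.vtx ((i + 1) % C.n) = v ∧ C.sgn i = false

/-- The cycle is even: it has an even number of negative arcs. -/
def IsEven {V : Type*} (C : CycleData V) : Prop :=
  Even (((Finset.range C.n).filter (fun i => C.sgn i = false)).card)

/-- `(u, v1, v2)` is a delocalizing triple of the cycle `C` in the signed graph `(P, N)`. -/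
def DelocTriple {V : Type*} (C : CycleData V) (P N : V → V → Prop) (u v1 v2 : V) : Prop :=
  InCycle C v1 ∧ InCycle C v2 ∧ v1 ≠ v2 ∧ P u v1 ∧ N u v2 ∧
    ¬ PosArcOf C u v1 ∧ ¬ NegArcOf C u v2

/-- The cycle `C` is strong in `(P, N)`: it admits no delocalizing triple. -/
def IsStrong {V : Type*} (C : CycleData V) (P N : V → V → Prop) : Prop :=
  ∀ u v1 v2, ¬ DelocTriple C P N u v1 v2

/-- All-positive path from `k` through the intermediate vertices `is` to the endpoint. -/
def PosPath {V : Type*} (P : V → V → Prop) : V → List V → V → Prop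
  | k, [], t => P k t
  | k, j :: js, t => P k j ∧ PosPath P j js t

/-- Path from `k` through intermediate vertices `js` to the endpoint whose arcs are all
positive except the last one, which is negative. -/
def PosNegPath {V : Type*} (P N : V → V → Prop) : V → List V → V → Prop
  | k, [], u => N k u
  | k, j :: js, u => P k j ∧ PosNegPath P N j js u

/-- `k` witnesses the inconsistency of the cycle `C` in the signed graph `(P, N)`. -/
def WitnessesIncons {V : Type*} (P N : V → V → Prop) (C : CycleData V) (k : V) : Prop :=
  ∃ (t u : V) (is js : List V),
    PosPath P k is t ∧ PosNegPath P N k js u ∧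
    InCycle C t ∧ InCycle C u ∧ t ≠ u ∧
    ¬ PosArcOf C k t ∧ ¬ NegArcOf C k u ∧
    ∀ j ∈ js, ∃! p : V × Bool, cond p.2 (P p.1 j) (N p.1 j)

/-- The cycle `C` is inconsistent in the signed graph `(P, N)`. -/
def Inconsistent {V : Type*} (P N : V → V → Prop) (C : CycleData V) : Prop :=
  ∃ k, WitnessesIncons P N C k

/-- The cycle `C` is consistent in the signed graph `(P, N)`. -/
def Consistent {V : Type*} (P N : V → V → Prop) (C : CycleData V) : Prop :=
  ¬ Inconsistent P N C

/-- `J` dominates the signed directed graph `(P, N)`. -/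
def Dominates {V : Type*} (J : Set V) (P N : V → V → Prop) : Prop :=
  (∀ C : CycleData V, IsCycleIn C P N → IsEven C → Consistent P N C →
    ∃ v ∈ J, InCycle C v) ∧
  (∀ C : CycleData V, IsCycleIn C P N → IsEven C → IsStrong C P N → Inconsistent P N C →
    (∃ v ∈ J, InCycle C v) ∨ ∃ k ∈ J, WitnessesIncons P N C k)

open Classical in
/-- The one-step percolation of a Boolean network: substitute the values of all
constant update functions into every update function. -/
noncomputable def percolate {V : Type*} (f : V → (V → Bool) → Bool) :
    V → (V → Bool) → Bool :=
  fun v x => f v (fun u => if h : ∃ b : Bool, ∀ y, f u y = b then h.choose else x u)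

lemma exists_attractor_subset {V : Type*} [Fintype V] (E : V → V → Prop) (A : Set V)
    (hA : TrapSet E A) : ∃ B ⊆ A, Attractor E B := by
  classical
  have hfin : {B : Set V | B ⊆ A ∧ TrapSet E B}.Finite := Set.toFinite _
  obtain ⟨B, hB, hmin⟩ := Set.Finite.exists_minimalFor id _ hfin ⟨A, subset_rfl, hA⟩
  refine ⟨B, hB.1, hB.2, fun C hCB hC => ?_⟩
  exact Set.Subset.antisymm hCB (hmin ⟨hCB.trans hB.1, hC⟩ hCB)

theorem stmt_0 {V : Type*} [Fintype V] (G G' : V → V → Prop)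
    (hsub : ∀ x y, G' x y → G x y) :
    (∃ m : {A : Set V // Attractor G A} → {A : Set V // Attractor G' A},
        Function.Injective m ∧ ∀ B, (m B).1 ⊆ B.1) ∧
      {A : Set V | Attractor G A}.ncard ≤ {A : Set V | Attractor G' A}.ncard := by
  classical
  have key : ∀ B : {A : Set V // Attractor G A}, ∃ A ⊆ B.1, Attractor G' A := by
    intro B
    exact exists_attractor_subset G' B.1 ⟨B.2.1.1, fun x hx y hxy => B.2.1.2 x hx y (hsub x y hxy)⟩
  choose a hsub' hattr using key
  set m : {A : Set V // Attractor G A} → {A : Set V // Attractor G' A} :=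
    fun B => ⟨a B, hattr B⟩ with hm
  have hinj : Function.Injective m := by
    intro B1 B2 h
    have hAB1 : a B1 ⊆ B1.1 := hsub' B1
    have hAB2 : a B1 ⊆ B2.1 := by
      have : a B1 = a B2 := congrArg Subtype.val h
      rw [this]; exact hsub' B2
    have hne : (B1.1 ∩ B2.1).Nonempty := (hattr B1).1.1.mono (Set.subset_inter hAB1 hAB2)
    have htrap : TrapSet G (B1.1 ∩ B2.1) :=
      ⟨hne, fun x hx y hxy => ⟨B1.2.1.2 x hx.1 y hxy, B2.2.1.2 x hx.2 y hxy⟩⟩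
    have h1 := B1.2.2 _ Set.inter_subset_left htrap
    have h2 := B2.2.2 _ Set.inter_subset_right htrap
    exact Subtype.ext (h1 ▸ h2)
  refine ⟨⟨m, hinj, hsub'⟩, ?_⟩
  have e1 : {A : Set V | Attractor G A}.ncard = Nat.card {A : Set V // Attractor G A} :=
    (Nat.card_coe_set_eq _).symm
  have e2 : {A : Set V | Attractor G' A}.ncard = Nat.card {A : Set V // Attractor G' A} :=
    (Nat.card_coe_set_eq _).symm
  rw [e1, e2]
  exact Nat.card_le_card_of_injective m hinj
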